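/- For 0 < H < 1, the maximal uniform oscillation of the class 𝔛^H is max over x ∈ 𝔛^H and s,t ∈ [0,1] of |x(t) − x(s)|, and it equals (2^H + 3)/(6(2^H − 1)). It is attained at s = 1/3 and t = 5/6 by the function x̃^H = e_{0,0} + Σ_{m=1}^∞ 2^{m(1/2−H)} (Σ_{k=0}^{2^{m−1}−1} e_{m,k} − Σ_{k=2^{m−1}}^{2^m−1} e_{m,k}). -/

import Mathlib

open Filter Finset Set MeasureTheory ProbabilityTheory

noncomputable def e00 (t : ℝ) : ℝ := max (min t (1 - t)) 0

noncomputable def fs (m : ℕ) (k : ℤ) (t : ℝ) : ℝ :=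
  (2 : ℝ) ^ (-(m : ℝ) / 2) * e00 ((2 : ℝ) ^ m * t - (k : ℝ))

def IsSign (θ : ℕ → ℕ → ℝ) : Prop := ∀ m k, θ m k = 1 ∨ θ m k = -1

noncomputable def tlTerm (H : ℝ) (θ : ℕ → ℕ → ℝ) (m : ℕ) (t : ℝ) : ℝ :=
  (2 : ℝ) ^ ((m : ℝ) * (1 / 2 - H)) *
    ∑ k ∈ Finset.range (2 ^ m), θ m k * fs m (k : ℤ) t

noncomputable def sPartial (H : ℝ) (θ : ℕ → ℕ → ℝ) (n : ℕ) (t : ℝ) : ℝ :=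
  ∑ m ∈ Finset.range n, tlTerm H θ m t

def MemX (H : ℝ) (x : ℝ → ℝ) : Prop :=
  ∃ θ : ℕ → ℕ → ℝ, IsSign θ ∧ ∀ t : ℝ, x t = ∑' m : ℕ, tlTerm H θ m t

noncomputable def xTL (H : ℝ) (t : ℝ) : ℝ := ∑' m : ℕ, tlTerm H (fun _ _ => 1) m t

noncomputable def dyadicSum (p : ℝ) (x : ℝ → ℝ) (n : ℕ) (t : ℝ) : ℝ :=
  ∑ k ∈ Finset.range (2 ^ n),
    if (k : ℝ) / 2 ^ n ≤ t then |x (((k : ℝ) + 1) / 2 ^ n) - x ((k : ℝ) / 2 ^ n)| ^ p else 0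

noncomputable def nuFloor (h : ℝ) : ℤ := ⌊-(Real.logb 2 h)⌋

noncomputable def omegaH (H h : ℝ) : ℝ :=
  h * (2 : ℝ) ^ (((nuFloor h : ℝ) - 1) * (1 - H)) / ((2 : ℝ) ^ (1 - H) - 1) +
    (2 : ℝ) ^ ((1 - (nuFloor h : ℝ)) * H) / (3 * (1 - (2 : ℝ) ^ (-H)))

noncomputable def thetaTilde : ℕ → ℕ → ℝ := fun m k =>
  if m = 0 then 1 else if k < 2 ^ (m - 1) then 1 else -1

noncomputable def xTilde (H : ℝ) (t : ℝ) : ℝ := ∑' m : ℕ, tlTerm H thetaTilde m t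

lemma e00_nonneg (t : ℝ) : 0 ≤ e00 t := le_max_right _ _

lemma e00_le_half (t : ℝ) : e00 t ≤ 1/2 := by
  unfold e00
  rcases le_total t (1/2) with h | h
  · exact max_le (le_trans (min_le_left _ _) h) (by norm_num)
  · exact max_le (le_trans (min_le_right _ _) (by linarith)) (by norm_num)

lemma e00_of_nonpos {t : ℝ} (h : t ≤ 0) : e00 t = 0 := by
  unfold e00
  rw [max_eq_right]
  exact le_trans (min_le_left _ _) h

lemma e00_of_one_le {t : ℝ} (h : 1 ≤ t) : e00 t = 0 := by
  unfold e00
  rw [max_eq_right]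
  exact le_trans (min_le_right _ _) (by linarith)

lemma e00_of_mem {t : ℝ} (h0 : 0 ≤ t) (h1 : t ≤ 1) : e00 t = min t (1-t) := by
  unfold e00
  rw [max_eq_left]
  rcases le_total t (1-t) with h | h
  · rw [min_eq_left h]; exact h0
  · rw [min_eq_right h]; linarith

noncomputable def psi (u : ℝ) : ℝ := e00 (Int.fract u)

lemma psi_nonneg (u : ℝ) : 0 ≤ psi u := e00_nonneg _
lemma psi_le_half (u : ℝ) : psi u ≤ 1/2 := e00_le_half _

lemma psi_eq (u : ℝ) : psi u = min (Int.fract u) (1 - Int.fract u) :=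
  e00_of_mem (Int.fract_nonneg u) (le_of_lt (Int.fract_lt_one u))

lemma fract_two_mul (u : ℝ) : Int.fract (2*u) = Int.fract (2 * Int.fract u) := by
  have h : (2:ℝ)*u = 2*Int.fract u + ((2*⌊u⌋ : ℤ):ℝ) := by
    rw [Int.fract]; push_cast; ring
  rw [h, Int.fract_add_intCast]

lemma psi_double (u : ℝ) : psi (2*u) = min (2 * psi u) (1 - 2 * psi u) := by
  set f := Int.fract u with hf
  have hf0 : 0 ≤ f := Int.fract_nonneg u
  have hf1 : f < 1 := Int.fract_lt_one u
  rcases lt_trichotomy (2*f) 1 with h | h | h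
  · have h2 : Int.fract (2*u) = 2*f := by
      rw [fract_two_mul, Int.fract_eq_self.mpr ⟨by linarith, h⟩]
    rw [psi_eq, psi_eq, h2, ← hf]
    rcases le_total f (1-f) with hh | hh <;> simp [min_def] <;> split_ifs <;> linarith
  · have h2 : Int.fract (2*u) = 0 := by
      rw [fract_two_mul, ← hf, h, Int.fract_one]
    rw [psi_eq, psi_eq, h2, ← hf]
    rcases le_total f (1-f) with hh | hh <;> simp [min_def] <;> split_ifs <;> linarith
  · have h2 : Int.fract (2*u) = 2*f - 1 := by
      rw [fract_two_mul, ← hf]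
      have e1 : Int.fract (2*f - 1 + 1) = Int.fract (2*f - 1) := Int.fract_add_one _
      have e2 : Int.fract (2*f - 1) = 2*f - 1 := Int.fract_eq_self.mpr ⟨by linarith, by linarith⟩
      rw [show (2:ℝ)*f = 2*f - 1 + 1 by ring, e1, e2]
      ring
    rw [psi_eq, psi_eq, h2, ← hf]
    rcases le_total f (1-f) with hh | hh <;> simp [min_def] <;> split_ifs <;> linarith

noncomputable def phi (x : ℝ) : ℝ := min x (1/3) - 1/3

noncomputable def dbl (x : ℝ) : ℝ := min (2*x) (1 - 2*x)

lemma phi_nonpos (x : ℝ) : phi x ≤ 0 := by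
  unfold phi; have := min_le_right x (1/3); linarith

lemma phi_neg_le (x : ℝ) (h : 0 ≤ x) : -(1/3) ≤ phi x := by
  unfold phi
  rcases le_total x (1/3) with hh | hh
  · rw [min_eq_left hh]; linarith
  · rw [min_eq_right hh]; norm_num

-- key step inequality P
lemma step_ineq {a q : ℝ} (ha0 : 0 ≤ a) (ha1 : a ≤ 1/2) (hq : 1/2 ≤ q) (hq1 : q ≤ 1) :
    a - 1/3 ≤ phi a - q * phi (dbl a) := by
  have h1 : phi (dbl a) ≤ 0 := phi_nonpos _
  have h2 : -(q * phi (dbl a)) ≥ -((1/2) * phi (dbl a)) := by nlinarith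
  have h3 : a - 1/3 ≤ phi a - (1/2) * phi (dbl a) := by
    unfold phi dbl
    rcases le_total (2*a) (1 - 2*a) with hd | hd <;>
      rcases le_total a (1/3) with hx | hx <;>
        simp [min_def] <;> split_ifs <;> linarith
  linarith

-- key coupling inequality K
lemma key_ineq {a b q : ℝ} (ha0 : 0 ≤ a) (ha1 : a ≤ 1/2) (hb0 : 0 ≤ b) (hb1 : b ≤ 1/2)
    (hq : 1/2 ≤ q) (hq1 : q ≤ 1) :
    |a - b| + q * phi (dbl a) + q * phi (dbl b) ≤ 1/6 := by
  have hpa : phi (dbl a) ≤ 0 := phi_nonpos _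
  have hpb : phi (dbl b) ≤ 0 := phi_nonpos _
  have h2a : q * phi (dbl a) ≤ (1/2) * phi (dbl a) := by nlinarith
  have h2b : q * phi (dbl b) ≤ (1/2) * phi (dbl b) := by nlinarith
  have hmain : ∀ x y : ℝ, 0 ≤ x → x ≤ 1/2 → 0 ≤ y → y ≤ 1/2 →
      (x - y) + (1/2) * phi (dbl x) + (1/2) * phi (dbl y) ≤ 1/6 := by
    intro x y hx0 hx1 hy0 hy1
    have hh : x + (1/2) * phi (dbl x) ≤ 1/3 := by
      unfold phi dbl
      rcases le_total (2*x) (1 - 2*x) with hd | hd <;>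
        simp [min_def] <;> split_ifs <;> linarith
    have hg : -y + (1/2) * phi (dbl y) ≤ -(1/6) := by
      unfold phi dbl
      rcases le_total (2*y) (1 - 2*y) with hd | hd <;>
        simp [min_def] <;> split_ifs <;> linarith
    linarith
  rcases abs_cases (a - b) with ⟨he, _⟩ | ⟨he, _⟩
  · have := hmain a b ha0 ha1 hb0 hb1; linarith
  · have := hmain b a hb0 hb1 ha0 ha1; linarith

lemma e00_sub_nat_le (u : ℝ) (k : ℕ) :
    e00 (u - (k:ℝ)) ≤ if (k:ℤ) = ⌊u⌋ then psi u else 0 := by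
  by_cases h : (k:ℤ) = ⌊u⌋
  · rw [if_pos h]
    have : u - (k:ℝ) = Int.fract u := by
      rw [Int.fract, ← h]; push_cast; ring
    rw [this]; exact le_refl _
  · rw [if_neg h]
    rcases lt_or_gt_of_ne h with hlt | hgt
    · -- k < ⌊u⌋, so k + 1 ≤ ⌊u⌋ ≤ u, u - k ≥ 1
      have h1 : ((k:ℤ):ℝ) + 1 ≤ (⌊u⌋:ℝ) := by exact_mod_cast Int.add_one_le_iff.mpr hlt
      have h2 : (⌊u⌋:ℝ) ≤ u := Int.floor_le u
      have : (1:ℝ) ≤ u - (k:ℝ) := by push_cast at h1 ⊢; linarith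
      rw [e00_of_one_le this]
    · -- ⌊u⌋ < k, so u < ⌊u⌋ + 1 ≤ k
      have h1 : (⌊u⌋:ℝ) + 1 ≤ ((k:ℤ):ℝ) := by exact_mod_cast Int.add_one_le_iff.mpr hgt
      have h2 : u < (⌊u⌋:ℝ) + 1 := Int.lt_floor_add_one u
      have : u - (k:ℝ) ≤ 0 := by push_cast at h1 ⊢; linarith
      rw [e00_of_nonpos this]

lemma sum_e00_le (c : ℕ → ℝ) (hc : ∀ k, |c k| ≤ 1) (N : ℕ) (u : ℝ) :
    |∑ k ∈ Finset.range N, c k * e00 (u - (k:ℝ))| ≤ psi u := by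
  calc |∑ k ∈ Finset.range N, c k * e00 (u - (k:ℝ))|
      ≤ ∑ k ∈ Finset.range N, |c k * e00 (u - (k:ℝ))| := Finset.abs_sum_le_sum_abs _ _
    _ ≤ ∑ k ∈ Finset.range N, (if (k:ℤ) = ⌊u⌋ then psi u else 0) := by
        apply Finset.sum_le_sum
        intro k _
        rw [abs_mul, abs_of_nonneg (e00_nonneg _)]
        calc |c k| * e00 (u - (k:ℝ)) ≤ 1 * e00 (u - (k:ℝ)) :=
              mul_le_mul_of_nonneg_right (hc k) (e00_nonneg _)
          _ = e00 (u - (k:ℝ)) := one_mul _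
          _ ≤ _ := e00_sub_nat_le u k
    _ ≤ psi u := by
        by_cases h : 0 ≤ ⌊u⌋
        · have : ∀ k : ℕ, ((k:ℤ) = ⌊u⌋) ↔ (k = ⌊u⌋.toNat) := by
            intro k
            constructor
            · intro hk; omega
            · intro hk; omega
          simp only [this]
          rw [Finset.sum_ite_eq' (Finset.range N) (⌊u⌋.toNat) (fun _ => psi u)]
          split_ifs
          · exact le_refl _
          · exact psi_nonneg u
        · have : ∀ k ∈ Finset.range N, (if (k:ℤ) = ⌊u⌋ then psi u else 0) = 0 := by
            intro k _
            rw [if_neg]; omega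
          rw [Finset.sum_congr rfl this, Finset.sum_const, smul_zero]
          exact psi_nonneg u

lemma two_rpow_arith (H : ℝ) (m : ℕ) :
    (2:ℝ) ^ ((m : ℝ) * (1 / 2 - H)) * (2:ℝ) ^ (-(m : ℝ) / 2) = ((2:ℝ)^(-H))^m := by
  rw [← Real.rpow_natCast ((2:ℝ)^(-H)) m, ← Real.rpow_mul (by norm_num : (0:ℝ) ≤ 2),
    ← Real.rpow_add (by norm_num : (0:ℝ) < 2)]
  ring_nf

lemma tlTerm_eq (H : ℝ) (θ : ℕ → ℕ → ℝ) (m : ℕ) (t : ℝ) :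
    tlTerm H θ m t =
      ((2:ℝ)^(-H))^m * ∑ k ∈ Finset.range (2 ^ m), θ m k * e00 ((2:ℝ)^m * t - (k:ℝ)) := by
  unfold tlTerm fs
  rw [← two_rpow_arith H m, mul_assoc, Finset.mul_sum, Finset.mul_sum, Finset.mul_sum]
  apply Finset.sum_congr rfl
  intro k _
  push_cast
  ring

lemma tlTerm_abs_le {θ : ℕ → ℕ → ℝ} (hθ : IsSign θ) (H : ℝ) (m : ℕ) (t : ℝ) :
    |tlTerm H θ m t| ≤ ((2:ℝ)^(-H))^m * psi ((2:ℝ)^m * t) := by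
  rw [tlTerm_eq, abs_mul]
  have hq : (0:ℝ) ≤ ((2:ℝ)^(-H))^m := pow_nonneg (Real.rpow_nonneg (by norm_num) _) m
  rw [abs_of_nonneg hq]
  apply mul_le_mul_of_nonneg_left _ hq
  apply sum_e00_le
  intro k
  rcases hθ m k with h | h <;> rw [h] <;> norm_num

lemma tlTerm_diff_le {θ : ℕ → ℕ → ℝ} (hθ : IsSign θ) (H : ℝ) (m : ℕ) (s t : ℝ) :
    |tlTerm H θ m t - tlTerm H θ m s| ≤
      ((2:ℝ)^(-H))^m * (psi ((2:ℝ)^m * t) + psi ((2:ℝ)^m * s)) := by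
  calc |tlTerm H θ m t - tlTerm H θ m s| ≤ |tlTerm H θ m t| + |tlTerm H θ m s| := abs_sub _ _
    _ ≤ _ := by
        rw [mul_add]
        exact add_le_add (tlTerm_abs_le hθ H m t) (tlTerm_abs_le hθ H m s)

lemma summable_tlTerm {θ : ℕ → ℕ → ℝ} (hθ : IsSign θ) {H : ℝ} (hH : 0 < H) (t : ℝ) :
    Summable (fun m => tlTerm H θ m t) := by
  have hq0 : (0:ℝ) ≤ (2:ℝ)^(-H) := Real.rpow_nonneg (by norm_num) _
  have hq1 : (2:ℝ)^(-H) < 1 := by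
    rw [show (1:ℝ) = (2:ℝ)^(0:ℝ) by norm_num]
    exact Real.rpow_lt_rpow_of_exponent_lt (by norm_num) (by linarith)
  apply Summable.of_norm_bounded
    ((summable_geometric_of_lt_one hq0 hq1).mul_right (1/2))
  intro m
  rw [Real.norm_eq_abs]
  calc |tlTerm H θ m t| ≤ ((2:ℝ)^(-H))^m * psi ((2:ℝ)^m * t) := tlTerm_abs_le hθ H m t
    _ ≤ ((2:ℝ)^(-H))^m * (1/2) :=
        mul_le_mul_of_nonneg_left (psi_le_half _) (pow_nonneg hq0 m)

lemma tlTerm_zero (H : ℝ) (θ : ℕ → ℕ → ℝ) (t : ℝ) :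
    tlTerm H θ 0 t = θ 0 0 * e00 t := by
  unfold tlTerm fs
  norm_num

lemma e00_eq_psi {t : ℝ} (h0 : 0 ≤ t) (h1 : t ≤ 1) : e00 t = psi t := by
  rcases eq_or_lt_of_le h1 with he | hlt
  · rw [he]
    unfold psi
    rw [Int.fract_one, e00_of_one_le le_rfl, e00_of_nonpos le_rfl]
  · unfold psi
    rw [Int.fract_eq_self.mpr ⟨h0, hlt⟩]

lemma telescope (a : ℕ → ℝ) (h0 : ∀ n, 0 ≤ a n) (h1 : ∀ n, a n ≤ 1/2)
    (hrec : ∀ n, a (n+1) = dbl (a n)) {q : ℝ} (hq : 1/2 ≤ q) (hq1 : q ≤ 1) (n : ℕ) :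
    ∑ j ∈ Finset.range n, q^(j+1) * (a (j+1) - 1/3)
      ≤ q * phi (a 1) - q^(n+1) * phi (a (n+1)) := by
  induction n with
  | zero => simp [pow_one]
  | succ n ih =>
    rw [Finset.sum_range_succ]
    have hstep := step_ineq (h0 (n+1)) (h1 (n+1)) hq hq1
    rw [← hrec (n+1)] at hstep
    have hqn : (0:ℝ) ≤ q^(n+1) := pow_nonneg (le_trans (by norm_num) hq) (n+1)
    have hmul := mul_le_mul_of_nonneg_left hstep hqn
    have expand : q^(n+1) * (phi (a (n+1)) - q * phi (a (n+1+1)))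
        = q^(n+1) * phi (a (n+1)) - q^(n+1+1) * phi (a (n+1+1)) := by ring
    rw [expand] at hmul
    linarith

set_option maxHeartbeats 2000000 in
lemma upper_bound {H : ℝ} (hH0 : 0 < H) (hH1 : H < 1) {θ : ℕ → ℕ → ℝ} (hθ : IsSign θ)
    {s t : ℝ} (hs : s ∈ Set.Icc (0:ℝ) 1) (ht : t ∈ Set.Icc (0:ℝ) 1) :
    |(∑' m, tlTerm H θ m t) - ∑' m, tlTerm H θ m s| ≤
      ((2:ℝ)^H + 3) / (6 * ((2:ℝ)^H - 1)) := by
  set q : ℝ := (2:ℝ)^(-H) with hqdef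
  have hq0 : (0:ℝ) < q := Real.rpow_pos_of_pos (by norm_num) _
  have hq1 : q < 1 := by
    rw [hqdef, show (1:ℝ) = (2:ℝ)^(0:ℝ) by norm_num]
    exact Real.rpow_lt_rpow_of_exponent_lt (by norm_num) (by linarith)
  have hqh : (1:ℝ)/2 ≤ q := by
    rw [hqdef, show (1:ℝ)/2 = (2:ℝ)^(-1:ℝ) by rw [Real.rpow_neg_one]; norm_num]
    exact le_of_lt (Real.rpow_lt_rpow_of_exponent_lt (by norm_num) (by linarith))
  set a : ℕ → ℝ := fun m => psi ((2:ℝ)^m * t) with hadef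
  set b : ℕ → ℝ := fun m => psi ((2:ℝ)^m * s) with hbdef
  have ha0 : ∀ m, 0 ≤ a m := fun m => psi_nonneg _
  have ha1 : ∀ m, a m ≤ 1/2 := fun m => psi_le_half _
  have hb0 : ∀ m, 0 ≤ b m := fun m => psi_nonneg _
  have hb1 : ∀ m, b m ≤ 1/2 := fun m => psi_le_half _
  have harec : ∀ m, a (m+1) = dbl (a m) := by
    intro m
    show psi ((2:ℝ)^(m+1) * t) = dbl (psi ((2:ℝ)^m * t))
    rw [show (2:ℝ)^(m+1) * t = 2 * ((2:ℝ)^m * t) by rw [pow_succ]; ring, psi_double]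
    rfl
  have hbrec : ∀ m, b (m+1) = dbl (b m) := by
    intro m
    show psi ((2:ℝ)^(m+1) * s) = dbl (psi ((2:ℝ)^m * s))
    rw [show (2:ℝ)^(m+1) * s = 2 * ((2:ℝ)^m * s) by rw [pow_succ]; ring, psi_double]
    rfl
  have hsum_t : Summable (fun m => tlTerm H θ m t) := summable_tlTerm hθ hH0 t
  have hsum_s : Summable (fun m => tlTerm H θ m s) := summable_tlTerm hθ hH0 s
  have hsum_d : Summable (fun m => tlTerm H θ m t - tlTerm H θ m s) := hsum_t.sub hsum_s
  have habs : Summable (fun m => |tlTerm H θ m t - tlTerm H θ m s|) := hsum_d.abs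
  have htail_sum : Summable (fun j => |tlTerm H θ (j+1) t - tlTerm H θ (j+1) s|) :=
    (summable_nat_add_iff 1).mpr habs
  -- step 1 : difference of tsums
  have e1 : (∑' m, tlTerm H θ m t) - ∑' m, tlTerm H θ m s
      = ∑' m, (tlTerm H θ m t - tlTerm H θ m s) := (Summable.tsum_sub hsum_t hsum_s).symm
  -- step 2 : abs of tsum
  have e2 : |∑' m, (tlTerm H θ m t - tlTerm H θ m s)|
      ≤ ∑' m, |tlTerm H θ m t - tlTerm H θ m s| := by
    have := norm_tsum_le_tsum_norm (f := fun m => tlTerm H θ m t - tlTerm H θ m s)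
      (by simpa [Real.norm_eq_abs] using habs)
    simpa [Real.norm_eq_abs] using this
  -- step 3 : peel off the first term
  have e3 : (∑' m, |tlTerm H θ m t - tlTerm H θ m s|)
      = |tlTerm H θ 0 t - tlTerm H θ 0 s|
        + ∑' j, |tlTerm H θ (j+1) t - tlTerm H θ (j+1) s| := Summable.tsum_eq_zero_add habs
  -- first term
  have e0 : |tlTerm H θ 0 t - tlTerm H θ 0 s| = |a 0 - b 0| := by
    rw [tlTerm_zero, tlTerm_zero, ← mul_sub, abs_mul]
    have : |θ 0 0| = 1 := by rcases hθ 0 0 with h | h <;> rw [h] <;> norm_num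
    rw [this, one_mul]
    have hat : a 0 = e00 t := by
      show psi ((2:ℝ)^(0:ℕ) * t) = e00 t
      rw [pow_zero, one_mul, e00_eq_psi ht.1 ht.2]
    have hbs : b 0 = e00 s := by
      show psi ((2:ℝ)^(0:ℕ) * s) = e00 s
      rw [pow_zero, one_mul, e00_eq_psi hs.1 hs.2]
    rw [hat, hbs]
  -- tail bound
  have etail : (∑' j, |tlTerm H θ (j+1) t - tlTerm H θ (j+1) s|)
      ≤ q * phi (a 1) + q * phi (b 1) + (2/3) * (q * (1-q)⁻¹) := by
    set C : ℝ := q * phi (a 1) + q * phi (b 1) + (2/3) * (q * (1-q)⁻¹) with hC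
    have hpartial : ∀ n : ℕ,
        (∑ j ∈ Finset.range n, |tlTerm H θ (j+1) t - tlTerm H θ (j+1) s|)
          ≤ C + (2/3) * q^(n+1) := by
      intro n
      have step1 : (∑ j ∈ Finset.range n, |tlTerm H θ (j+1) t - tlTerm H θ (j+1) s|)
          ≤ ∑ j ∈ Finset.range n, q^(j+1) * (a (j+1) + b (j+1)) := by
        apply Finset.sum_le_sum
        intro j _
        exact tlTerm_diff_le hθ H (j+1) s t
      have split : ∀ j : ℕ, q^(j+1) * (a (j+1) + b (j+1))
          = q^(j+1) * (2/3) + (q^(j+1) * (a (j+1) - 1/3) + q^(j+1) * (b (j+1) - 1/3)) := by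
        intro j; ring
      have step2 : (∑ j ∈ Finset.range n, q^(j+1) * (a (j+1) + b (j+1)))
          = (∑ j ∈ Finset.range n, q^(j+1) * (2/3))
            + ((∑ j ∈ Finset.range n, q^(j+1) * (a (j+1) - 1/3))
              + (∑ j ∈ Finset.range n, q^(j+1) * (b (j+1) - 1/3))) := by
        rw [← Finset.sum_add_distrib, ← Finset.sum_add_distrib]
        exact Finset.sum_congr rfl (fun j _ => split j)
      have geo : (∑ j ∈ Finset.range n, q^(j+1) * (2/3)) ≤ (2/3) * (q * (1-q)⁻¹) := by
        have h1 : ∀ j : ℕ, q^(j+1) * (2/3) = ((2/3) * q) * q^j := by intro j; ring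
        rw [Finset.sum_congr rfl (fun j _ => h1 j), ← Finset.mul_sum]
        have h2 : (∑ j ∈ Finset.range n, q^j) ≤ (1-q)⁻¹ := by
          have := Summable.sum_le_tsum (Finset.range n)
            (fun i _ => pow_nonneg hq0.le i) (summable_geometric_of_lt_one hq0.le hq1)
          rwa [tsum_geometric_of_lt_one hq0.le hq1] at this
        calc ((2/3) * q) * (∑ j ∈ Finset.range n, q^j) ≤ ((2/3) * q) * (1-q)⁻¹ :=
              mul_le_mul_of_nonneg_left h2 (by positivity)
          _ = (2/3) * (q * (1-q)⁻¹) := by ring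
      have tela := telescope a ha0 ha1 harec hqh hq1.le n
      have telb := telescope b hb0 hb1 hbrec hqh hq1.le n
      have hqn1 : (0:ℝ) ≤ q^(n+1) := pow_nonneg hq0.le _
      have hpa : -(1/3) ≤ phi (a (n+1)) := phi_neg_le _ (ha0 _)
      have hpb : -(1/3) ≤ phi (b (n+1)) := phi_neg_le _ (hb0 _)
      have hna : -(q^(n+1) * phi (a (n+1))) ≤ q^(n+1) * (1/3) := by nlinarith
      have hnb : -(q^(n+1) * phi (b (n+1))) ≤ q^(n+1) * (1/3) := by nlinarith
      calc (∑ j ∈ Finset.range n, |tlTerm H θ (j+1) t - tlTerm H θ (j+1) s|)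
          ≤ ∑ j ∈ Finset.range n, q^(j+1) * (a (j+1) + b (j+1)) := step1
        _ = _ := step2
        _ ≤ C + (2/3) * q^(n+1) := by rw [hC]; linarith
    have hlim1 : Filter.Tendsto
        (fun n => ∑ j ∈ Finset.range n, |tlTerm H θ (j+1) t - tlTerm H θ (j+1) s|)
        Filter.atTop (nhds (∑' j, |tlTerm H θ (j+1) t - tlTerm H θ (j+1) s|)) :=
      htail_sum.hasSum.tendsto_sum_nat
    have hlim2 : Filter.Tendsto (fun n : ℕ => C + (2/3) * q^(n+1)) Filter.atTop (nhds C) := by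
      have hpow : Filter.Tendsto (fun n : ℕ => q^n) Filter.atTop (nhds 0) :=
        tendsto_pow_atTop_nhds_zero_of_lt_one hq0.le hq1
      have : Filter.Tendsto (fun n : ℕ => C + (2/3) * q^(n+1)) Filter.atTop
          (nhds (C + (2/3) * q * 0)) := by
        apply Filter.Tendsto.const_add
        have := (hpow.const_mul ((2/3) * q))
        apply this.congr
        intro n; ring
      simpa using this
    exact le_of_tendsto_of_tendsto' hlim1 hlim2 hpartial
  -- key inequality at level 0
  have hkey : |a 0 - b 0| + q * phi (a 1) + q * phi (b 1) ≤ 1/6 := by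
    rw [harec 0, hbrec 0]
    exact key_ineq (ha0 0) (ha1 0) (hb0 0) (hb1 0) hqh hq1.le
  -- final arithmetic
  have hfinal : (1:ℝ)/6 + (2/3) * (q * (1-q)⁻¹) = ((2:ℝ)^H + 3) / (6 * ((2:ℝ)^H - 1)) := by
    have hp1 : (1:ℝ) < (2:ℝ)^H := by
      rw [show (1:ℝ) = (2:ℝ)^(0:ℝ) by norm_num]
      exact Real.rpow_lt_rpow_of_exponent_lt (by norm_num) hH0
    have hq_eq : q = ((2:ℝ)^H)⁻¹ := by
      rw [hqdef, Real.rpow_neg (by norm_num)]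
    have hp0 : (2:ℝ)^H ≠ 0 := by positivity
    have hpm1 : (2:ℝ)^H - 1 ≠ 0 := by linarith
    have h1q : (1:ℝ) - q ≠ 0 := by linarith
    rw [hq_eq]
    rw [hq_eq] at h1q
    field_simp
    ring
  calc |(∑' m, tlTerm H θ m t) - ∑' m, tlTerm H θ m s|
      = |∑' m, (tlTerm H θ m t - tlTerm H θ m s)| := by rw [e1]
    _ ≤ ∑' m, |tlTerm H θ m t - tlTerm H θ m s| := e2
    _ = |tlTerm H θ 0 t - tlTerm H θ 0 s|
        + ∑' j, |tlTerm H θ (j+1) t - tlTerm H θ (j+1) s| := e3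
    _ ≤ |a 0 - b 0| + (q * phi (a 1) + q * phi (b 1) + (2/3) * (q * (1-q)⁻¹)) := by
        rw [e0]; linarith
    _ ≤ 1/6 + (2/3) * (q * (1-q)⁻¹) := by linarith
    _ = ((2:ℝ)^H + 3) / (6 * ((2:ℝ)^H - 1)) := hfinal

lemma thetaTilde_sign : IsSign thetaTilde := by
  intro m k
  unfold thetaTilde
  split_ifs <;> simp

lemma sum_e00_eq (c : ℕ → ℝ) (N k₀ : ℕ) (u : ℝ) (hk : k₀ < N)
    (h1 : (k₀:ℝ) ≤ u) (h2 : u ≤ (k₀:ℝ) + 1) :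
    ∑ k ∈ Finset.range N, c k * e00 (u - (k:ℝ)) = c k₀ * e00 (u - (k₀:ℝ)) := by
  apply Finset.sum_eq_single k₀
  · intro k _ hne
    rcases lt_or_gt_of_ne hne with hlt | hgt
    · have hcast : (k:ℝ) + 1 ≤ (k₀:ℝ) := by exact_mod_cast Nat.succ_le_of_lt hlt
      rw [e00_of_one_le (by linarith), mul_zero]
    · have hcast : (k₀:ℝ) + 1 ≤ (k:ℝ) := by exact_mod_cast Nat.succ_le_of_lt hgt
      rw [e00_of_nonpos (by linarith), mul_zero]
  · intro hmem
    exact absurd (Finset.mem_range.mpr hk) hmem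

lemma two_pow_mod_three (m : ℕ) : 2^m % 3 = 1 ∨ 2^m % 3 = 2 := by
  have hne : 2^m % 3 ≠ 0 := by
    intro h
    have hdvd : (3:ℕ) ∣ 2^m := Nat.dvd_of_mod_eq_zero h
    have := Nat.Prime.dvd_of_dvd_pow (by norm_num : Nat.Prime 3) hdvd
    omega
  have := Nat.mod_lt (2^m) (show 0 < 3 by norm_num)
  omega

lemma five_two_pow_mod_three (j : ℕ) : (5 * 2^j) % 3 = 1 ∨ (5 * 2^j) % 3 = 2 := by
  have hne : (5 * 2^j) % 3 ≠ 0 := by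
    intro h
    have hdvd : (3:ℕ) ∣ 5 * 2^j := Nat.dvd_of_mod_eq_zero h
    have := (Nat.Prime.dvd_mul (by norm_num : Nat.Prime 3)).mp hdvd
    rcases this with h5 | hp
    · omega
    · have := Nat.Prime.dvd_of_dvd_pow (by norm_num : Nat.Prime 3) hp
      omega
  have := Nat.mod_lt (5 * 2^j) (show 0 < 3 by norm_num)
  omega

lemma e00_third : e00 (1/3 : ℝ) = 1/3 := by
  unfold e00; norm_num

lemma e00_two_third : e00 (2/3 : ℝ) = 1/3 := by
  unfold e00
  rw [show (1:ℝ) - 2/3 = 1/3 by norm_num, min_eq_right (by norm_num), max_eq_left (by norm_num)]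

lemma tl_third (H : ℝ) (m : ℕ) :
    tlTerm H thetaTilde m (1/3) = ((2:ℝ)^(-H))^m * (1/3) := by
  rw [tlTerm_eq]
  set k₀ : ℕ := 2^m / 3 with hk0
  have hdm : 3 * k₀ + 2^m % 3 = 2^m := Nat.div_add_mod (2^m) 3
  have hr := two_pow_mod_three m
  have hpow_pos : 0 < 2^m := Nat.pow_pos (by norm_num)
  have hcastpow : ((2:ℝ))^m = ((2^m : ℕ) : ℝ) := by push_cast; ring
  have hu : (2:ℝ)^m * (1/3) = ((2^m : ℕ) : ℝ) / 3 := by rw [hcastpow]; ring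
  have hkN : k₀ < 2^m := by omega
  have h1 : (k₀:ℝ) ≤ (2:ℝ)^m * (1/3) := by
    rw [hu]
    have : (3:ℝ) * (k₀:ℝ) ≤ ((2^m : ℕ) : ℝ) := by exact_mod_cast (by omega : 3 * k₀ ≤ 2^m)
    linarith
  have h2 : (2:ℝ)^m * (1/3) ≤ (k₀:ℝ) + 1 := by
    rw [hu]
    have : ((2^m : ℕ) : ℝ) ≤ 3 * (k₀:ℝ) + 2 := by exact_mod_cast (by omega : 2^m ≤ 3 * k₀ + 2)
    linarith
  rw [sum_e00_eq _ _ k₀ _ hkN h1 h2]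
  have hθ : thetaTilde m k₀ = 1 := by
    unfold thetaTilde
    by_cases hm : m = 0
    · rw [if_pos hm]
    · rw [if_neg hm, if_pos]
      have h2m : 2^m = 2 * 2^(m-1) := by
        rw [← pow_succ']
        congr 1
        omega
      have hpos : 0 < 2^(m-1) := Nat.pow_pos (by norm_num)
      omega
  have he : e00 ((2:ℝ)^m * (1/3) - (k₀:ℝ)) = 1/3 := by
    rcases hr with hr | hr
    · have : (2:ℝ)^m * (1/3) - (k₀:ℝ) = 1/3 := by
        rw [hu]
        have : ((2^m : ℕ) : ℝ) = 3 * (k₀:ℝ) + 1 := by exact_mod_cast (by omega : 2^m = 3 * k₀ + 1)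
        linarith
      rw [this, e00_third]
    · have : (2:ℝ)^m * (1/3) - (k₀:ℝ) = 2/3 := by
        rw [hu]
        have : ((2^m : ℕ) : ℝ) = 3 * (k₀:ℝ) + 2 := by exact_mod_cast (by omega : 2^m = 3 * k₀ + 2)
        linarith
      rw [this, e00_two_third]
  rw [hθ, he, one_mul]

lemma tl_fivesixth_zero (H : ℝ) : tlTerm H thetaTilde 0 (5/6) = 1/6 := by
  rw [tlTerm_zero]
  have : thetaTilde 0 0 = 1 := by unfold thetaTilde; norm_num
  rw [this, one_mul]
  unfold e00
  rw [show (1:ℝ) - 5/6 = 1/6 by norm_num, min_eq_right (by norm_num), max_eq_left (by norm_num)]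

lemma tl_fivesixth (H : ℝ) (j : ℕ) :
    tlTerm H thetaTilde (j+1) (5/6) = ((2:ℝ)^(-H))^(j+1) * (-(1/3)) := by
  rw [tlTerm_eq]
  set n : ℕ := 5 * 2^j with hn
  set k₀ : ℕ := n / 3 with hk0
  have hdm : 3 * k₀ + n % 3 = n := Nat.div_add_mod n 3
  have hr := five_two_pow_mod_three j
  have hpos : 0 < 2^j := Nat.pow_pos (by norm_num)
  have hu : (2:ℝ)^(j+1) * (5/6) = ((n : ℕ) : ℝ) / 3 := by
    rw [hn]
    push_cast
    rw [pow_succ]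
    ring
  have hkN : k₀ < 2^(j+1) := by
    have h2m : 2^(j+1) = 2 * 2^j := by rw [pow_succ]; ring
    omega
  have h1 : (k₀:ℝ) ≤ (2:ℝ)^(j+1) * (5/6) := by
    rw [hu]
    have : (3:ℝ) * (k₀:ℝ) ≤ ((n : ℕ) : ℝ) := by exact_mod_cast (by omega : 3 * k₀ ≤ n)
    linarith
  have h2 : (2:ℝ)^(j+1) * (5/6) ≤ (k₀:ℝ) + 1 := by
    rw [hu]
    have : ((n : ℕ) : ℝ) ≤ 3 * (k₀:ℝ) + 2 := by exact_mod_cast (by omega : n ≤ 3 * k₀ + 2)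
    linarith
  rw [sum_e00_eq _ _ k₀ _ hkN h1 h2]
  have hθ : thetaTilde (j+1) k₀ = -1 := by
    unfold thetaTilde
    rw [if_neg (by omega), if_neg]
    push_neg
    show 2^(j+1-1) ≤ k₀
    have : j + 1 - 1 = j := by omega
    rw [this]
    omega
  have he : e00 ((2:ℝ)^(j+1) * (5/6) - (k₀:ℝ)) = 1/3 := by
    rcases hr with hr | hr
    · have : (2:ℝ)^(j+1) * (5/6) - (k₀:ℝ) = 1/3 := by
        rw [hu]
        have : ((n : ℕ) : ℝ) = 3 * (k₀:ℝ) + 1 := by exact_mod_cast (by omega : n = 3 * k₀ + 1)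
        linarith
      rw [this, e00_third]
    · have : (2:ℝ)^(j+1) * (5/6) - (k₀:ℝ) = 2/3 := by
        rw [hu]
        have : ((n : ℕ) : ℝ) = 3 * (k₀:ℝ) + 2 := by exact_mod_cast (by omega : n = 3 * k₀ + 2)
        linarith
      rw [this, e00_two_third]
  rw [hθ, he]
  ring

lemma xTilde_diff {H : ℝ} (hH0 : 0 < H) (hH1 : H < 1) :
    |xTilde H (5/6) - xTilde H (1/3)| = ((2:ℝ)^H + 3) / (6 * ((2:ℝ)^H - 1)) := by
  set q : ℝ := (2:ℝ)^(-H) with hqdef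
  have hq0 : (0:ℝ) < q := Real.rpow_pos_of_pos (by norm_num) _
  have hq1 : q < 1 := by
    rw [hqdef, show (1:ℝ) = (2:ℝ)^(0:ℝ) by norm_num]
    exact Real.rpow_lt_rpow_of_exponent_lt (by norm_num) (by linarith)
  have hqh : (1:ℝ)/2 ≤ q := by
    rw [hqdef, show (1:ℝ)/2 = (2:ℝ)^(-1:ℝ) by rw [Real.rpow_neg_one]; norm_num]
    exact le_of_lt (Real.rpow_lt_rpow_of_exponent_lt (by norm_num) (by linarith))
  have hgeom : Summable (fun m : ℕ => q^m) := summable_geometric_of_lt_one hq0.le hq1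
  have htsum_geom : ∑' m : ℕ, q^m = (1-q)⁻¹ := tsum_geometric_of_lt_one hq0.le hq1
  have hthird : xTilde H (1/3) = (1-q)⁻¹ * (1/3) := by
    unfold xTilde
    rw [tsum_congr (fun m => tl_third H m), tsum_mul_right, htsum_geom]
  have hfive : xTilde H (5/6) = 1/6 + (q * (1-q)⁻¹) * (-(1/3)) := by
    unfold xTilde
    rw [Summable.tsum_eq_zero_add (summable_tlTerm thetaTilde_sign hH0 (5/6)), tl_fivesixth_zero]
    congr 1
    rw [tsum_congr (fun j => tl_fivesixth H j)]
    have : ∀ j : ℕ, q^(j+1) * (-(1/3)) = (q * (-(1/3))) * q^j := by intro j; ring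
    rw [tsum_congr this, tsum_mul_left, htsum_geom]
    ring
  rw [hfive, hthird]
  have h1q : (0:ℝ) < 1 - q := by linarith
  have hinv : (2:ℝ) ≤ (1-q)⁻¹ := by
    rw [show (2:ℝ) = (1/2 : ℝ)⁻¹ by norm_num]
    exact inv_anti₀ h1q (by linarith)
  have hneg : 1/6 + (q * (1-q)⁻¹) * (-(1/3)) - (1-q)⁻¹ * (1/3) ≤ 0 := by nlinarith
  rw [abs_of_nonpos hneg]
  have hp1 : (1:ℝ) < (2:ℝ)^H := by
    rw [show (1:ℝ) = (2:ℝ)^(0:ℝ) by norm_num]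
    exact Real.rpow_lt_rpow_of_exponent_lt (by norm_num) hH0
  have hq_eq : q = ((2:ℝ)^H)⁻¹ := by
    rw [hqdef, Real.rpow_neg (by norm_num)]
  have hp0 : (2:ℝ)^H ≠ 0 := by positivity
  have hpm1 : (2:ℝ)^H - 1 ≠ 0 := by linarith
  have h1q' : (1:ℝ) - q ≠ 0 := by linarith
  rw [hq_eq]
  rw [hq_eq] at h1q'
  field_simp
  ring

theorem stmt6 (H : ℝ) (hH : H ∈ Set.Ioo (0:ℝ) 1) :
    IsGreatest {y : ℝ | ∃ x s t, MemX H x ∧ s ∈ Set.Icc (0:ℝ) 1 ∧ t ∈ Set.Icc (0:ℝ) 1 ∧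
        y = |x t - x s|} (((2:ℝ)^H + 3) / (6 * ((2:ℝ)^H - 1))) ∧
    MemX H (xTilde H) ∧
    |xTilde H (5/6) - xTilde H (1/3)| = ((2:ℝ)^H + 3) / (6 * ((2:ℝ)^H - 1)) := by
  obtain ⟨hH0, hH1⟩ := hH
  have hmem : MemX H (xTilde H) := ⟨thetaTilde, thetaTilde_sign, fun t => rfl⟩
  have hval := xTilde_diff hH0 hH1
  refine ⟨⟨?_, ?_⟩, hmem, hval⟩
  · exact ⟨xTilde H, 1/3, 5/6, hmem, by norm_num, by norm_num, hval.symm⟩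
  · rintro y ⟨x, s, t, ⟨θ, hθ, hx⟩, hs, ht, rfl⟩
    rw [hx t, hx s]
    exact upper_bound hH0 hH1 hθ hs ht
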